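/- Let p be an odd prime, Δ = (ℤ/pℤ)ˣ, and pθ = −Σ_{i=1}^{p−1} i·σ_i^{−1}. Let 𝒪 be an integral domain in which p − 1 is invertible (in the paper, 𝒪 is the valuation ring of ℚ_ℓ(μ_{p−1}) for a prime ℓ ∤ p − 1), and let ψ : Δ → 𝒪ˣ be a group homomorphism. Let e_ψ = (p−1)^{−1}·Σ_{σ∈Δ} ψ(σ)·σ^{−1} ∈ 𝒪[Δ] (an idempotent), and let ψ also denote the 𝒪-algebra homomorphism 𝒪[Δ] → 𝒪 sending Σ a_σ·σ to Σ a_σ·ψ(σ), so that ψ(pθ) = −Σ_{i=1}^{p−1} i·ψ(σ_i)^{−1}. Then the 𝒪-module e_ψ·(𝒪[Δ]/(pθ·𝒪[Δ])) is isomorphic to 𝒪/(ψ(pθ)·𝒪). In particular, if ψ is nontrivial and even (ψ(σ_{−1}) = 1), then e_ψ·(𝒪[Δ]/(pθ·𝒪[Δ])) ≅ 𝒪. (Paper's Theorem 'key_iso1'.) -/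

import Mathlib

/-- The integralized Stickelberger element `pθ = −Σ_{i=1}^{p−1} i·σ_i^{−1}` in the group
ring `𝒪[Δ]` over a commutative ring `𝒪`, where `Δ = (ℤ/pℤ)ˣ`. -/
noncomputable def pThetaR (p : ℕ) [Fact p.Prime] (O : Type*) [CommRing O] :
    MonoidAlgebra O (ZMod p)ˣ :=
  -∑ u : (ZMod p)ˣ, MonoidAlgebra.single u⁻¹ (((u : ZMod p).val : O))

/-- The idempotent `e_ψ = (p−1)⁻¹·Σ_{σ∈Δ} ψ(σ)·σ⁻¹ ∈ 𝒪[Δ]` attached to a character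
`ψ : Δ → 𝒪ˣ` (using `Ring.inverse` for the inverse of `p − 1`). -/
noncomputable def idem (p : ℕ) [Fact p.Prime] (O : Type*) [CommRing O]
    (ψ : (ZMod p)ˣ →* Oˣ) : MonoidAlgebra O (ZMod p)ˣ :=
  Ring.inverse ((p - 1 : ℕ) : O) •
    ∑ σ : (ZMod p)ˣ, MonoidAlgebra.single σ⁻¹ ((ψ σ : Oˣ) : O)

/-- The image `ψ(pθ) = −Σ_{i=1}^{p−1} i·ψ(σ_i)⁻¹ ∈ 𝒪` of `pθ` under the algebra
homomorphism induced by `ψ`. -/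
noncomputable def psiPTheta (p : ℕ) [Fact p.Prime] (O : Type*) [CommRing O]
    (ψ : (ZMod p)ˣ →* Oˣ) : O :=
  -∑ u : (ZMod p)ˣ, ((u : ZMod p).val : O) * (((ψ u)⁻¹ : Oˣ) : O)

section Aux

variable (p : ℕ) [Fact p.Prime] (O : Type*) [CommRing O] (ψ : (ZMod p)ˣ →* Oˣ)

/-- The algebra homomorphism `𝒪[Δ] → 𝒪` induced by `ψ`. -/
noncomputable def psiHat : MonoidAlgebra O (ZMod p)ˣ →ₐ[O] O :=
  MonoidAlgebra.lift O O (ZMod p)ˣ ((Units.coeHom O).comp ψ)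

/-- The unnormalized sum `Σ_σ ψ(σ)·σ⁻¹`. -/
noncomputable def Esum : MonoidAlgebra O (ZMod p)ˣ :=
  ∑ σ : (ZMod p)ˣ, MonoidAlgebra.single σ⁻¹ ((ψ σ : Oˣ) : O)

lemma idem_eq : idem p O ψ = Ring.inverse ((p - 1 : ℕ) : O) • Esum p O ψ := rfl

lemma psiHat_single (a : (ZMod p)ˣ) (b : O) :
    psiHat p O ψ (MonoidAlgebra.single a b) = b * ((ψ a : Oˣ) : O) := by
  simp [psiHat, MonoidAlgebra.lift_single, smul_eq_mul]

lemma single_mul_Esum (σ : (ZMod p)ˣ) (r : O) :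
    MonoidAlgebra.single σ r * Esum p O ψ = (r * ((ψ σ : Oˣ) : O)) • Esum p O ψ := by
  rw [Esum, Finset.mul_sum, Finset.smul_sum]
  refine Fintype.sum_equiv (Equiv.mulLeft σ⁻¹) _ _ fun τ => ?_
  simp only [Equiv.coe_mulLeft]
  rw [MonoidAlgebra.single_mul_single, MonoidAlgebra.smul_single, map_mul, map_inv]
  have h1 : σ * τ⁻¹ = (σ⁻¹ * τ)⁻¹ := by rw [mul_inv, inv_inv]
  rw [h1]
  congr 1
  rw [Units.val_mul, smul_eq_mul]
  have h2 : ((ψ σ : Oˣ) : O) * (((ψ σ)⁻¹ : Oˣ) : O) = 1 := by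
    rw [← Units.val_mul, mul_inv_cancel, Units.val_one]
  linear_combination (-(r * ((ψ τ : Oˣ) : O))) * h2

lemma mul_Esum (x : MonoidAlgebra O (ZMod p)ˣ) :
    x * Esum p O ψ = psiHat p O ψ x • Esum p O ψ := by
  have key : (LinearMap.mulRight O (Esum p O ψ)) =
      (LinearMap.toSpanSingleton O _ (Esum p O ψ)).comp (psiHat p O ψ).toLinearMap := by
    refine MonoidAlgebra.lhom_ext' fun a => LinearMap.ext fun b => ?_
    simp only [LinearMap.comp_apply, MonoidAlgebra.lsingle_apply,
      LinearMap.mulRight_apply, AlgHom.toLinearMap_apply,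
      LinearMap.toSpanSingleton_apply]
    rw [single_mul_Esum, psiHat_single]
  simpa using congrArg (fun f => f x) key

lemma mul_idem (x : MonoidAlgebra O (ZMod p)ˣ) :
    x * idem p O ψ = psiHat p O ψ x • idem p O ψ := by
  rw [idem_eq, mul_smul_comm, mul_Esum, smul_comm]

lemma psiHat_Esum : psiHat p O ψ (Esum p O ψ) = ((p - 1 : ℕ) : O) := by
  rw [Esum, map_sum]
  have : ∀ σ : (ZMod p)ˣ, psiHat p O ψ
      (MonoidAlgebra.single σ⁻¹ ((ψ σ : Oˣ) : O)) = 1 := by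
    intro σ
    rw [psiHat_single, map_inv, ← Units.val_mul, mul_inv_cancel, Units.val_one]
  rw [Finset.sum_congr rfl fun σ _ => this σ]
  simp [ZMod.card_units_eq_totient, Nat.totient_prime (Fact.out : p.Prime)]

lemma psiHat_idem (hu : IsUnit ((p - 1 : ℕ) : O)) : psiHat p O ψ (idem p O ψ) = 1 := by
  rw [idem_eq, map_smul, psiHat_Esum, smul_eq_mul, Ring.inverse_mul_cancel _ hu]

lemma psiHat_pThetaR : psiHat p O ψ (pThetaR p O) = psiPTheta p O ψ := by
  rw [pThetaR, psiPTheta, map_neg, map_sum, neg_inj]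
  refine Finset.sum_congr rfl fun u _ => ?_
  rw [psiHat_single, map_inv]

end Aux

/-- Paper's Theorem `key_iso1`: let `p` be an odd prime, `𝒪` an integral domain in which
`p − 1` is invertible, and `ψ : Δ → 𝒪ˣ` a character. Then the `𝒪`-module
`e_ψ·(𝒪[Δ]/(pθ·𝒪[Δ]))` is isomorphic to `𝒪/(ψ(pθ)·𝒪)`; in particular, for `ψ` nontrivial
and even it is isomorphic to `𝒪`. -/
theorem stmt17 (p : ℕ) [Fact p.Prime] (hp : Odd p)
    (O : Type*) [CommRing O] [IsDomain O]
    (hu : IsUnit ((p - 1 : ℕ) : O))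
    (ψ : (ZMod p)ˣ →* Oˣ) :
    Nonempty
      ((LinearMap.range (LinearMap.mulLeft O
          (Ideal.Quotient.mk (Ideal.span {pThetaR p O}) (idem p O ψ)))) ≃ₗ[O]
        (O ⧸ Ideal.span {psiPTheta p O ψ})) ∧
    (ψ ≠ 1 → ((ψ (-1) : Oˣ) : O) = 1 →
      Nonempty
        ((LinearMap.range (LinearMap.mulLeft O
            (Ideal.Quotient.mk (Ideal.span {pThetaR p O}) (idem p O ψ)))) ≃ₗ[O] O)) := by
  haveI : NeZero p := ⟨(Fact.out : p.Prime).ne_zero⟩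
  set I : Ideal (MonoidAlgebra O (ZMod p)ˣ) := Ideal.span {pThetaR p O} with hI
  set e : MonoidAlgebra O (ZMod p)ˣ ⧸ I := Ideal.Quotient.mk I (idem p O ψ) with he
  set φ : O →ₗ[O] (MonoidAlgebra O (ZMod p)ˣ ⧸ I) := LinearMap.toSpanSingleton O _ e with hφ
  have hmk : ∀ (c : O) (x : MonoidAlgebra O (ZMod p)ˣ),
      Ideal.Quotient.mk I (c • x) = c • Ideal.Quotient.mk I x := fun c x => by
    rw [← Ideal.Quotient.mkₐ_eq_mk O I]
    exact map_smul (Ideal.Quotient.mkₐ O I) c x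
  -- range equality
  have hrange : LinearMap.range (LinearMap.mulLeft O e) = LinearMap.range φ := by
    apply le_antisymm
    · rintro y ⟨z, rfl⟩
      obtain ⟨x, rfl⟩ := Ideal.Quotient.mk_surjective z
      refine ⟨psiHat p O ψ x, ?_⟩
      simp only [hφ, LinearMap.toSpanSingleton_apply, he, LinearMap.mulLeft_apply]
      calc psiHat p O ψ x • Ideal.Quotient.mk I (idem p O ψ)
          = Ideal.Quotient.mk I (psiHat p O ψ x • idem p O ψ) := (hmk _ _).symm
        _ = Ideal.Quotient.mk I (x * idem p O ψ) := by rw [mul_idem]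
        _ = Ideal.Quotient.mk I (idem p O ψ) * Ideal.Quotient.mk I x := by
            rw [map_mul]; exact mul_comm (Ideal.Quotient.mk I x) _
    · rintro y ⟨c, rfl⟩
      refine ⟨c • 1, ?_⟩
      simp only [LinearMap.mulLeft_apply, mul_smul_comm, hφ,
        LinearMap.toSpanSingleton_apply]
      rw [mul_one e]
  -- kernel computation
  have hker : LinearMap.ker φ = Ideal.span {psiPTheta p O ψ} := by
    ext c
    rw [LinearMap.mem_ker, hφ, LinearMap.toSpanSingleton_apply, he, ← hmk,
      Ideal.Quotient.eq_zero_iff_mem, hI, Ideal.mem_span_singleton,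
      Ideal.mem_span_singleton]
    constructor
    · rintro ⟨a, ha⟩
      refine ⟨psiHat p O ψ a, ?_⟩
      have := congrArg (psiHat p O ψ) ha
      rwa [map_smul, psiHat_idem p O ψ hu, map_mul, psiHat_pThetaR, smul_eq_mul,
        mul_one] at this
    · rintro ⟨d, rfl⟩
      refine ⟨d • idem p O ψ, ?_⟩
      rw [mul_smul_comm, mul_idem, psiHat_pThetaR, smul_smul, mul_comm]
  have iso1 : (LinearMap.range (LinearMap.mulLeft O e)) ≃ₗ[O]
      (O ⧸ Ideal.span {psiPTheta p O ψ}) :=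
    (LinearEquiv.ofEq _ _ hrange).trans
      ((φ.quotKerEquivRange).symm.trans (Submodule.quotEquivOfEq _ _ hker))
  refine ⟨⟨iso1⟩, fun hne heven => ?_⟩
  -- ψ(pθ) = 0 in the nontrivial even case
  have hψeven : ψ (-1) = 1 := Units.val_eq_one.mp heven
  -- sum of character values is zero
  set T : O := ∑ u : (ZMod p)ˣ, (((ψ u)⁻¹ : Oˣ) : O) with hT
  have hT0 : T = 0 := by
    obtain ⟨σ, hσ⟩ : ∃ σ, ψ σ ≠ 1 := by
      by_contra h
      push_neg at h
      exact hne (MonoidHom.ext fun σ => h σ)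
    have hshift : (((ψ σ)⁻¹ : Oˣ) : O) * T = T := by
      rw [hT, Finset.mul_sum]
      refine Fintype.sum_equiv (Equiv.mulLeft σ) _ _ fun u => ?_
      simp [map_mul, mul_inv, Units.val_mul, mul_comm]
    have : ((((ψ σ)⁻¹ : Oˣ) : O) - 1) * T = 0 := by
      rw [sub_mul, one_mul, hshift, sub_self]
    rcases mul_eq_zero.mp this with h | h
    · exact absurd ((inv_eq_one).mp (Units.val_eq_one.mp (sub_eq_zero.mp h))) hσ
    · exact h
  set S : O := ∑ u : (ZMod p)ˣ, (((u : ZMod p).val : O) * (((ψ u)⁻¹ : Oˣ) : O)) with hS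
  have hSneg : S = ∑ u : (ZMod p)ˣ, ((p : O) - ((u : ZMod p).val : O)) * (((ψ u)⁻¹ : Oˣ) : O) := by
    rw [hS]
    refine Fintype.sum_equiv (Equiv.mulLeft (-1 : (ZMod p)ˣ)) _ _ fun u => ?_
    simp only [Equiv.coe_mulLeft]
    have h1 : ((-1 * u : (ZMod p)ˣ) : ZMod p) = -(u : ZMod p) := by
      push_cast; ring
    have h2 : (-(u : ZMod p)).val = p - (u : ZMod p).val := by
      rw [ZMod.neg_val, if_neg u.ne_zero]
    have h3 : ((p - (u : ZMod p).val : ℕ) : O) = (p : O) - ((u : ZMod p).val : O) := by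
      have := (ZMod.val_lt (u : ZMod p)).le
      push_cast [Nat.cast_sub this]
      ring
    rw [h1, h2, h3, map_mul, hψeven, one_mul]
    ring
  have h2S : S + S = (p : O) * T := by
    nth_rewrite 1 [hSneg]
    rw [hT, Finset.mul_sum, ← Finset.sum_add_distrib]
    refine Finset.sum_congr rfl fun u _ => ?_
    ring
  have h2unit : IsUnit (2 : O) := by
    obtain ⟨k, hk⟩ := hp
    have hk1 : p - 1 = 2 * k := by omega
    have : ((p - 1 : ℕ) : O) = 2 * (k : O) := by rw [hk1]; push_cast; ring
    rw [this] at hu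
    exact isUnit_of_mul_isUnit_left hu
  have hS0 : S = 0 := by
    have : (2 : O) * S = 0 := by rw [two_mul, h2S, hT0, mul_zero]
    rcases mul_eq_zero.mp this with h | h
    · exact absurd h h2unit.ne_zero
    · exact h
  have hθ0 : psiPTheta p O ψ = 0 := by rw [psiPTheta, ← hS, hS0, neg_zero]
  have hbot : Ideal.span {psiPTheta p O ψ} = (⊥ : Ideal O) := by
    rw [hθ0, Ideal.span_singleton_eq_bot]
  exact ⟨iso1.trans (Submodule.quotEquivOfEqBot _ hbot)⟩
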